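/- Let X = lim (X_s, p^t_s, Σ) and Y = lim (Y_s, q^t_s, Σ) with projections p_s : X → X_s, q_s : Y → Y_s, where both inverse systems are σ-complete and all X_s, Y_s are compact metrizable, and let f : X → Y be a continuous map. Then there exist a σ-closed cofinal subset T ⊆ Σ and continuous maps f_t : X_t → Y_t (t ∈ T) such that q_t ∘ f = f_t ∘ p_t for every t ∈ T. Moreover, if f is an open map then T and the maps f_t can be chosen so that each f_t is open. -/

import Mathlib

open Set Filter Topology
set_option linter.unusedSectionVars false
set_option linter.unusedVariables false
set_option maxHeartbeats 1000000

/-- An inverse system over a directed partially ordered set `ι`: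
compact Hausdorff spaces `X s` and continuous surjective bonding maps
`r h : X t → X s` for `h : s ≤ t`, with the identity and composition laws. -/
structure IsInvSys {ι : Type*} [PartialOrder ι] {X : ι → Type*}
    [∀ s, TopologicalSpace (X s)]
    (r : ∀ ⦃s t : ι⦄, s ≤ t → X t → X s) : Prop where
  directed : ∀ a b : ι, ∃ c, a ≤ c ∧ b ≤ c
  continuous : ∀ ⦃s t : ι⦄ (h : s ≤ t), Continuous (r h)
  surjective : ∀ ⦃s t : ι⦄ (h : s ≤ t), Function.Surjective (r h)
  map_id : ∀ (s : ι) (x : X s), r (le_refl s) x = x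
  map_comp : ∀ ⦃s t u : ι⦄ (h₁ : s ≤ t) (h₂ : t ≤ u) (x : X u),
    r h₁ (r h₂ x) = r (h₁.trans h₂) x

/-- The limit of an inverse system: the space of threads, a subspace of the
product `Π s, X s`.  The projection onto the `s`-th coordinate is `x ↦ x.1 s`. -/
abbrev InvLim {ι : Type*} [PartialOrder ι] {X : ι → Type*}
    [∀ s, TopologicalSpace (X s)]
    (r : ∀ ⦃s t : ι⦄, s ≤ t → X t → X s) : Type _ :=
  {x : ∀ s, X s // ∀ ⦃s t : ι⦄ (h : s ≤ t), r h (x t) = x s}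

/-- σ-completeness of an inverse system. -/
def SigmaComplete {ι : Type*} [PartialOrder ι] {X : ι → Type*}
    [∀ s, TopologicalSpace (X s)]
    (r : ∀ ⦃s t : ι⦄, s ≤ t → X t → X s) : Prop :=
  ∀ T : Set ι, T.Nonempty → T.Countable → DirectedOn (· ≤ ·) T →
    ∃ t : ι, ∃ hlub : IsLUB T t, ∀ x y : X t,
      (∀ s (hs : s ∈ T), r (hlub.1 hs) x = r (hlub.1 hs) y) → x = y

/-- A subset `T` of a σ-complete directed poset is σ-closed if the least upper
bound of every nonempty countable directed subset of `T` belongs to `T`. -/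
def SigmaClosedIn {ι : Type*} [PartialOrder ι] (T : Set ι) : Prop :=
  ∀ M : Set ι, M ⊆ T → M.Nonempty → M.Countable → DirectedOn (· ≤ ·) M →
    ∀ t : ι, IsLUB M t → t ∈ T

section Helpers

variable {ι : Type*} [PartialOrder ι] {X : ι → Type*}
    [∀ s, TopologicalSpace (X s)] [∀ s, CompactSpace (X s)] [∀ s, T2Space (X s)]
    {r : ∀ ⦃s t : ι⦄, s ≤ t → X t → X s}

lemma invLim_isClosed (hr : IsInvSys r) :
    IsClosed {x : ∀ s, X s | ∀ ⦃s t : ι⦄ (h : s ≤ t), r h (x t) = x s} := by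
  have h : {x : ∀ s, X s | ∀ ⦃s t : ι⦄ (h : s ≤ t), r h (x t) = x s} =
      ⋂ (s : ι), ⋂ (t : ι), ⋂ (h : s ≤ t), {x : ∀ s, X s | r h (x t) = x s} := by
    ext x; simp only [mem_iInter, mem_setOf_eq]
  rw [h]
  exact isClosed_iInter fun s => isClosed_iInter fun t => isClosed_iInter fun h =>
    isClosed_eq ((hr.continuous h).comp (continuous_apply t)) (continuous_apply s)

lemma invLim_compactSpace (hr : IsInvSys r) : CompactSpace (InvLim r) :=
  isCompact_iff_compactSpace.mp ((invLim_isClosed hr).isCompact)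

lemma continuous_proj (t : ι) : Continuous fun x : InvLim r => x.1 t :=
  (continuous_apply t).comp continuous_subtype_val

lemma nonempty_of_point (hr : IsInvSys r) {t0 : ι} (a : X t0) (s : ι) : Nonempty (X s) := by
  obtain ⟨v, hsv, htv⟩ := hr.directed s t0
  obtain ⟨b, _⟩ := hr.surjective htv a
  exact ⟨r hsv b⟩

lemma proj_surjective (hr : IsInvSys r) (t0 : ι) :
    Function.Surjective (fun x : InvLim r => x.1 t0) := by
  classical
  intro a
  haveI : ∀ s, Nonempty (X s) := nonempty_of_point hr a
  set K : {u : ι // t0 ≤ u} → Set (∀ s, X s) :=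
    fun u => {x | x t0 = a ∧ ∀ s (h : s ≤ u.1), x s = r h (x u.1)} with hK
  have hclosed : ∀ u, IsClosed (K u) := by
    intro u
    have : K u = {x : ∀ s, X s | x t0 = a} ∩
        ⋂ s, ⋂ (h : s ≤ u.1), {x : ∀ s, X s | x s = r h (x u.1)} := by
      ext x; simp only [hK, mem_setOf_eq, mem_inter_iff, mem_iInter]
    rw [this]
    exact (isClosed_eq (continuous_apply t0) continuous_const).inter
      (isClosed_iInter fun s => isClosed_iInter fun h =>
        isClosed_eq (continuous_apply s) ((hr.continuous h).comp (continuous_apply u.1)))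
  have hne : ∀ u, (K u).Nonempty := by
    intro u
    obtain ⟨b, hb⟩ := hr.surjective u.2 a
    refine ⟨fun s => if h : s ≤ u.1 then r h b else Classical.arbitrary (X s), ?_, ?_⟩
    · simp only [dif_pos u.2, hb]
    · intro s h
      simp only [dif_pos h, dif_pos (le_refl u.1), hr.map_id]
  have hdir : Directed (fun a b : Set (∀ s, X s) => a ⊇ b) K := by
    intro u v
    obtain ⟨c, hc1, hc2⟩ := hr.directed u.1 v.1
    refine ⟨⟨c, u.2.trans hc1⟩, ?_, ?_⟩ <;>
    · rintro x ⟨hx0, hx⟩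
      refine ⟨hx0, fun s h => ?_⟩
      first
      | (rw [hx s (h.trans hc1), hx u.1 hc1, hr.map_comp])
      | (rw [hx s (h.trans hc2), hx v.1 hc2, hr.map_comp])
  haveI : Nonempty {u : ι // t0 ≤ u} := ⟨⟨t0, le_refl t0⟩⟩
  obtain ⟨x, hx⟩ := IsCompact.nonempty_iInter_of_directed_nonempty_isCompact_isClosed
    K hdir hne (fun u => (hclosed u).isCompact) hclosed
  simp only [mem_iInter] at hx
  have hthread : ∀ ⦃s t : ι⦄ (h : s ≤ t), r h (x t) = x s := by
    intro s t h
    obtain ⟨c, hc1, hc2⟩ := hr.directed t t0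
    have hxc := hx ⟨c, hc2⟩
    rw [hxc.2 s (h.trans hc1), hxc.2 t hc1, hr.map_comp]
  exact ⟨⟨x, hthread⟩, (hx ⟨t0, le_refl t0⟩).1⟩

lemma chain_lub (hsc : SigmaComplete r) {c : ℕ → ι} (hc : Monotone c) :
    ∃ t, ∃ hlub : IsLUB (Set.range c) t, ∀ x y : X t,
      (∀ n : ℕ, r (hlub.1 (Set.mem_range_self n)) x = r (hlub.1 (Set.mem_range_self n)) y) →
        x = y := by
  have hdir : DirectedOn (· ≤ ·) (Set.range c) := by
    rintro a ⟨m, rfl⟩ b ⟨n, rfl⟩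
    exact ⟨c (max m n), Set.mem_range_self _, hc (le_max_left m n), hc (le_max_right m n)⟩
  obtain ⟨t, hlub, hinj⟩ := hsc (Set.range c) (Set.range_nonempty c) (Set.countable_range c) hdir
  refine ⟨t, hlub, fun x y h => hinj x y ?_⟩
  rintro s ⟨n, rfl⟩
  exact h n

lemma exists_factor (hr : IsInvSys r) (hsc : SigmaComplete r)
    {Z : Type*} [TopologicalSpace Z] [TopologicalSpace.MetrizableSpace Z]
    (g : InvLim r → Z) (hg : Continuous g) (s0 : ι) :
    ∃ t, s0 ≤ t ∧ ∀ x x' : InvLim r, x.1 t = x'.1 t → g x = g x' := by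
  classical
  letI : MetricSpace Z := TopologicalSpace.metrizableSpaceMetric Z
  haveI : Nonempty ι := ⟨s0⟩
  haveI : IsDirected ι (· ≤ ·) := ⟨hr.directed⟩
  haveI : CompactSpace (InvLim r) := invLim_compactSpace hr
  -- key approximation step
  have key : ∀ ε : ℝ, 0 < ε → ∃ M : ι, ∀ x x' : InvLim r,
      x.1 M = x'.1 M → dist (g x) (g x') ≤ ε := by
    intro ε hε
    -- for each point, a basic open neighborhood inside the ε/2-ball preimage
    have step : ∀ x : InvLim r, ∃ (I : Finset ι) (u : ∀ i : ι, Set (X i)) (m : ι),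
        (∀ i ∈ I, i ≤ m) ∧ (∀ i ∈ I, IsOpen (u i) ∧ x.1 i ∈ u i) ∧
        (Subtype.val ⁻¹' ((↑I : Set ι).pi u) ⊆ g ⁻¹' Metric.ball (g x) (ε/2)) := by
      intro x
      have hopen : IsOpen (g ⁻¹' Metric.ball (g x) (ε/2)) :=
        hg.isOpen_preimage _ Metric.isOpen_ball
      rw [isOpen_induced_iff] at hopen
      obtain ⟨O, hO, hOeq⟩ := hopen
      have hxO : x.1 ∈ O := by
        have : x ∈ g ⁻¹' Metric.ball (g x) (ε/2) := by
          simp [Metric.mem_ball, half_pos hε]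
        rw [← hOeq] at this; exact this
      obtain ⟨I, u, hIu, hpi⟩ := isOpen_pi_iff.mp hO x.1 hxO
      obtain ⟨m, hm⟩ := I.exists_le
      exact ⟨I, u, m, hm, hIu, by rw [← hOeq]; exact fun y hy => hpi hy⟩
    choose I u m hm hIu hsub using step
    -- compactness: finite subcover
    have hcov : (Set.univ : Set (InvLim r)) ⊆
        ⋃ x : InvLim r, Subtype.val ⁻¹' ((↑(I x) : Set ι).pi (u x)) := by
      intro x _
      refine Set.mem_iUnion.mpr ⟨x, ?_⟩
      intro i hi
      exact (hIu x i hi).2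
    obtain ⟨F, hF⟩ := isCompact_univ.elim_finite_subcover _
      (fun x => (isOpen_set_pi (Finset.finite_toSet (I x))
        (fun i hi => (hIu x i hi).1)).preimage continuous_subtype_val) hcov
    obtain ⟨M, hM⟩ := (F.image m).exists_le
    refine ⟨M, fun x x' hxx' => ?_⟩
    obtain ⟨x0, hx0F, hx0⟩ := Set.mem_iUnion₂.mp (hF (Set.mem_univ x))
    have hmM : m x0 ≤ M := hM _ (Finset.mem_image_of_mem m hx0F)
    have hx' : x' ∈ Subtype.val ⁻¹' ((↑(I x0) : Set ι).pi (u x0)) := by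
      intro i hi
      have hiM : i ≤ M := (hm x0 i hi).trans hmM
      have e1 : x'.1 i = r hiM (x'.1 M) := (x'.2 hiM).symm
      have e2 : x.1 i = r hiM (x.1 M) := (x.2 hiM).symm
      rw [e1, ← hxx', ← e2]
      exact hx0 i hi
    have d1 : dist (g x) (g x0) < ε/2 := hsub x0 hx0
    have d2 : dist (g x') (g x0) < ε/2 := hsub x0 hx'
    calc dist (g x) (g x') ≤ dist (g x) (g x0) + dist (g x0) (g x') := dist_triangle _ _ _
      _ = dist (g x) (g x0) + dist (g x') (g x0) := by rw [dist_comm (g x0)]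
      _ ≤ ε/2 + ε/2 := by linarith
      _ = ε := by ring
  -- build a chain
  have step : ∀ (n : ℕ) (v : ι), ∃ w, v ≤ w ∧ ∀ x x' : InvLim r,
      x.1 w = x'.1 w → dist (g x) (g x') ≤ 1/(n+1 : ℝ) := by
    intro n v
    obtain ⟨M, hM⟩ := key (1/(n+1 : ℝ)) (by positivity)
    obtain ⟨w, hvw, hMw⟩ := hr.directed v M
    refine ⟨w, hvw, fun x x' h => hM x x' ?_⟩
    rw [← x.2 hMw, ← x'.2 hMw, h]
  choose st hst1 hst2 using step
  set c : ℕ → ι := fun n => Nat.rec s0 (fun n v => st n v) n with hc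
  have hcs : ∀ n, c (n+1) = st n (c n) := fun n => rfl
  have hmono : Monotone c := monotone_nat_of_le_succ fun n => by rw [hcs n]; exact hst1 n (c n)
  obtain ⟨t, hlub, -⟩ := chain_lub hsc hmono
  refine ⟨t, hlub.1 ⟨0, rfl⟩, fun x x' h => ?_⟩
  apply eq_of_forall_dist_le
  intro ε hε
  obtain ⟨n, hn⟩ := exists_nat_one_div_lt hε
  have hle : c (n+1) ≤ t := hlub.1 ⟨n+1, rfl⟩
  have : x.1 (c (n+1)) = x'.1 (c (n+1)) := by rw [← x.2 hle, ← x'.2 hle, h]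
  have := hst2 n (c n) x x' (by rw [← hcs n] at *; exact this)
  calc dist (g x) (g x') ≤ 1/(n+1 : ℝ) := this
    _ ≤ ε := by linarith


end Helpers

section Main

variable {ι : Type*} [PartialOrder ι] {X Y : ι → Type*}
    [∀ s, TopologicalSpace (X s)] [∀ s, CompactSpace (X s)] [∀ s, T2Space (X s)]
    [∀ s, TopologicalSpace.MetrizableSpace (X s)]
    [∀ s, TopologicalSpace (Y s)] [∀ s, CompactSpace (Y s)] [∀ s, T2Space (Y s)]
    [∀ s, TopologicalSpace.MetrizableSpace (Y s)]
    {p : ∀ ⦃s t : ι⦄, s ≤ t → X t → X s} {q : ∀ ⦃s t : ι⦄, s ≤ t → Y t → Y s}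

variable (p q) in
def Tm (f : InvLim p → InvLim q) : Set ι :=
  {t | ∀ x x' : InvLim p, x.1 t = x'.1 t → (f x).1 t = (f x').1 t}

lemma Tm_sigmaClosed (hqsc : SigmaComplete q) (f : InvLim p → InvLim q) :
    SigmaClosedIn (Tm p q f) := by
  intro M hMT hMne hMc hMdir t hlub
  obtain ⟨t', hlub', hinj⟩ := hqsc M hMne hMc hMdir
  obtain rfl : t' = t := hlub'.unique hlub
  intro x x' hxx'
  apply hinj
  intro s hs
  have hst : s ≤ t' := hlub'.1 hs
  rw [(f x).2 hst, (f x').2 hst]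
  exact hMT hs x x' (by rw [← x.2 hst, ← x'.2 hst, hxx'])

lemma Tm_cofinal (hpsys : IsInvSys p) (hpsc : SigmaComplete p) (hqsc : SigmaComplete q)
    (f : InvLim p → InvLim q) (hf : Continuous f) (s0 : ι) :
    ∃ t ∈ Tm p q f, s0 ≤ t := by
  have step : ∀ v : ι, ∃ w, v ≤ w ∧ ∀ x x' : InvLim p,
      x.1 w = x'.1 w → (f x).1 v = (f x').1 v :=
    fun v => exists_factor hpsys hpsc (fun x => (f x).1 v) ((continuous_proj v).comp hf) v
  choose st h1 h2 using step
  set c : ℕ → ι := fun n => st^[n] s0 with hc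
  have hcs : ∀ n, c (n+1) = st (c n) := fun n => Function.iterate_succ_apply' st n s0
  have hmono : Monotone c := monotone_nat_of_le_succ fun n => by rw [hcs]; exact h1 (c n)
  obtain ⟨t, hlub, hinj⟩ := chain_lub (r := q) hqsc hmono
  refine ⟨t, ?_, hlub.1 ⟨0, rfl⟩⟩
  intro x x' hxx'
  apply hinj
  intro n
  have h1t : c n ≤ t := hlub.1 ⟨n, rfl⟩
  have h2t : c (n+1) ≤ t := hlub.1 ⟨n+1, rfl⟩
  rw [(f x).2 h1t, (f x').2 h1t]
  have hx1 : x.1 (c (n+1)) = x'.1 (c (n+1)) := by rw [← x.2 h2t, ← x'.2 h2t, hxx']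
  rw [hcs] at hx1
  exact h2 (c n) x x' hx1

variable (p q) in
noncomputable def mkF (hpsys : IsInvSys p) (f : InvLim p → InvLim q) (t : ι) (a : X t) : Y t :=
  (f (proj_surjective hpsys t a).choose).1 t

lemma mkF_spec (hpsys : IsInvSys p) (f : InvLim p → InvLim q) {t : ι} (ht : t ∈ Tm p q f)
    (x : InvLim p) : (f x).1 t = mkF p q hpsys f t (x.1 t) :=
  ht x _ ((proj_surjective hpsys t (x.1 t)).choose_spec).symm

lemma mkF_continuous (hpsys : IsInvSys p) {f : InvLim p → InvLim q} (hf : Continuous f)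
    {t : ι} (ht : t ∈ Tm p q f) : Continuous (mkF p q hpsys f t) := by
  haveI : CompactSpace (InvLim p) := invLim_compactSpace hpsys
  rw [continuous_iff_isClosed]
  intro C hC
  have heq : mkF p q hpsys f t ⁻¹' C
      = (fun x : InvLim p => x.1 t) '' ((fun x => (f x).1 t) ⁻¹' C) := by
    ext a
    constructor
    · intro ha
      obtain ⟨x, hx⟩ := proj_surjective hpsys t a
      refine ⟨x, ?_, hx⟩
      have hx' : x.1 t = a := hx
      show (f x).1 t ∈ C
      rw [mkF_spec hpsys f ht, hx']
      exact ha
    · rintro ⟨x, hx, rfl⟩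
      have hx' : (f x).1 t ∈ C := hx
      show mkF p q hpsys f t (x.1 t) ∈ C
      rw [← mkF_spec hpsys f ht]
      exact hx'
  rw [heq]
  exact (((hC.preimage ((continuous_proj t).comp hf)).isCompact).image (continuous_proj t)).isClosed

variable (q) in
def Sat (t : ι) (V : Set (InvLim q)) : Prop :=
  ∀ y ∈ V, ∀ z : InvLim q, z.1 t = y.1 t → z ∈ V

lemma Sat.mono {t t' : ι} (h : t ≤ t') {V : Set (InvLim q)} (hs : Sat q t V) : Sat q t' V :=
  fun y hy z hz => hs y hy z (by rw [← z.2 h, ← y.2 h, hz])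

lemma Sat.iUnion {t : ι} {κ : Sort*} {V : κ → Set (InvLim q)} (h : ∀ k, Sat q t (V k)) :
    Sat q t (⋃ k, V k) := by
  rintro y hy z hz
  obtain ⟨k, hk⟩ := mem_iUnion.mp hy
  exact mem_iUnion.mpr ⟨k, h k y hk z hz⟩

lemma Sat.biUnion {t : ι} {κ : Type*} {A : Set κ} {V : κ → Set (InvLim q)}
    (h : ∀ k ∈ A, Sat q t (V k)) : Sat q t (⋃ k ∈ A, V k) := by
  rintro y hy z hz
  obtain ⟨k, hk, hyk⟩ := mem_iUnion₂.mp hy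
  exact mem_iUnion₂.mpr ⟨k, hk, h k hk y hyk z hz⟩

lemma sat_basic {t : ι} {I : Finset ι} {u : ∀ i : ι, Set (Y i)} (hI : ∀ i ∈ I, i ≤ t) :
    Sat q t (Subtype.val ⁻¹' ((↑I : Set ι).pi u)) := by
  intro y hy z hz i hi
  have h1 : z.1 i = q (hI i hi) (z.1 t) := (z.2 (hI i hi)).symm
  rw [h1, hz, y.2 (hI i hi)]
  exact hy i hi

lemma exists_sat_compact_open (hqsys : IsInvSys q) (s0 : ι) {K V : Set (InvLim q)}
    (hK : IsCompact K) (hV : IsOpen V) (hKV : K ⊆ V) :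
    ∃ t, ∃ W, K ⊆ W ∧ W ⊆ V ∧ Sat q t W := by
  classical
  haveI : Nonempty ι := ⟨s0⟩
  haveI : IsDirected ι (· ≤ ·) := ⟨hqsys.directed⟩
  obtain ⟨O, hO, hOV⟩ := isOpen_induced_iff.mp hV
  have step : ∀ y : {y : InvLim q // y ∈ V}, ∃ (I : Finset ι) (u : ∀ i : ι, Set (Y i)) (m : ι),
      (∀ i ∈ I, i ≤ m) ∧ (∀ i ∈ I, IsOpen (u i) ∧ (y : InvLim q).1 i ∈ u i) ∧
      Subtype.val ⁻¹' ((↑I : Set ι).pi u) ⊆ V := by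
    intro y
    have hyO : (y : InvLim q).1 ∈ O := by
      have h2 : (y : InvLim q) ∈ Subtype.val ⁻¹' O := by rw [hOV]; exact y.2
      exact h2
    obtain ⟨I, u, hIu, hpi⟩ := isOpen_pi_iff.mp hO _ hyO
    obtain ⟨m, hm⟩ := I.exists_le
    exact ⟨I, u, m, hm, hIu, by rw [← hOV]; exact fun z hz => hpi hz⟩
  choose I u m hm hIu hsub using step
  set B : {y : InvLim q // y ∈ V} → Set (InvLim q) :=
    fun y => Subtype.val ⁻¹' ((↑(I y) : Set ι).pi (u y)) with hB
  have hKcov : K ⊆ ⋃ y, B y := fun z hz =>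
    mem_iUnion.mpr ⟨⟨z, hKV hz⟩, fun i hi => (hIu _ i hi).2⟩
  obtain ⟨F, hF⟩ := hK.elim_finite_subcover B
    (fun y => (isOpen_set_pi (Finset.finite_toSet (I y))
      (fun i hi => (hIu y i hi).1)).preimage continuous_subtype_val) hKcov
  obtain ⟨t, ht⟩ := (F.image m).exists_le
  refine ⟨t, ⋃ y ∈ F, B y, hF, iUnion₂_subset fun y _ => hsub y, ?_⟩
  exact Sat.biUnion fun y hy =>
    Sat.mono (ht _ (Finset.mem_image_of_mem m hy)) (sat_basic (hm y))

lemma exists_sat_one (hpsys : IsInvSys p) (hqsys : IsInvSys q) (hqsc : SigmaComplete q)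
    {f : InvLim p → InvLim q} (hf : Continuous f) (hfo : IsOpenMap f)
    (s0 : ι) {U : Set (X s0)} (hU : IsOpen U) :
    ∃ t, s0 ≤ t ∧ Sat q t (f '' {x | x.1 s0 ∈ U}) := by
  classical
  haveI : CompactSpace (InvLim p) := invLim_compactSpace hpsys
  letI : MetricSpace (X s0) := TopologicalSpace.metrizableSpaceMetric (X s0)
  have hVopen : IsOpen (f '' {x | x.1 s0 ∈ U}) := hfo _ (hU.preimage (continuous_proj s0))
  rcases eq_empty_or_nonempty (Uᶜ) with hUc | hUc
  · -- U = univ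
    have hUuniv : U = univ := by rwa [compl_empty_iff] at hUc
    have hset : {x : InvLim p | x.1 s0 ∈ U} = univ := by
      rw [hUuniv]; exact eq_univ_of_forall fun x => mem_univ _
    have hKcomp : IsCompact (f '' {x | x.1 s0 ∈ U}) := by
      rw [hset]; exact isCompact_univ.image hf
    obtain ⟨t, W, hKW, hWV, hsat⟩ :=
      exists_sat_compact_open hqsys s0 hKcomp hVopen (subset_refl _)
    have hWeq : W = f '' {x | x.1 s0 ∈ U} := le_antisymm hWV hKW
    obtain ⟨t', ht1, ht2⟩ := hqsys.directed s0 t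
    exact ⟨t', ht1, Sat.mono ht2 (hWeq ▸ hsat)⟩
  · have hUcc : IsClosed (Uᶜ) := hU.isClosed_compl
    set Kn : ℕ → Set (X s0) := fun n => {a | 1/(n+1 : ℝ) ≤ Metric.infDist a (Uᶜ)} with hKn
    have hKn_closed : ∀ n, IsClosed (Kn n) :=
      fun n => isClosed_le continuous_const (Metric.continuous_infDist_pt _)
    have hKnU : ∀ n, Kn n ⊆ U := by
      intro n a ha
      by_contra hcon
      have h0 : 0 < Metric.infDist a (Uᶜ) := lt_of_lt_of_le (by positivity) ha
      have := (hUcc.notMem_iff_infDist_pos hUc).mpr h0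
      exact this (by simpa using hcon)
    have hUKn : U ⊆ ⋃ n, Kn n := by
      intro a ha
      have h0 : 0 < Metric.infDist a (Uᶜ) :=
        (hUcc.notMem_iff_infDist_pos hUc).mp (fun h => h ha)
      obtain ⟨n, hn⟩ := exists_nat_one_div_lt h0
      exact mem_iUnion.mpr ⟨n, le_of_lt hn⟩
    have stepn : ∀ n : ℕ, ∃ t, ∃ W, f '' {x | x.1 s0 ∈ Kn n} ⊆ W ∧
        W ⊆ f '' {x | x.1 s0 ∈ U} ∧ Sat q t W := by
      intro n
      have hC : IsCompact (f '' {x | x.1 s0 ∈ Kn n}) :=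
        (((hKn_closed n).preimage (continuous_proj s0)).isCompact).image hf
      exact exists_sat_compact_open hqsys s0 hC hVopen
        (image_mono (fun x hx => hKnU n hx))
    choose tn W hCW hWV hsat using stepn
    -- chain dominating s0 and all tn
    have step : ∀ (n : ℕ) (v : ι), ∃ w, v ≤ w ∧ tn n ≤ w := fun n v => hqsys.directed v (tn n)
    choose st h1 h2 using step
    set c : ℕ → ι := fun n => Nat.rec s0 (fun n v => st n v) n with hc
    have hcs : ∀ n, c (n+1) = st n (c n) := fun n => rfl
    have hmono : Monotone c := monotone_nat_of_le_succ fun n => by rw [hcs]; exact h1 n (c n)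
    obtain ⟨t, hlub, -⟩ := chain_lub (r := q) hqsc hmono
    refine ⟨t, hlub.1 ⟨0, rfl⟩, ?_⟩
    have hVeq : f '' {x | x.1 s0 ∈ U} = ⋃ n, W n := by
      apply le_antisymm
      · rintro y ⟨x, hx, rfl⟩
        obtain ⟨n, hn⟩ := mem_iUnion.mp (hUKn hx)
        exact mem_iUnion.mpr ⟨n, hCW n ⟨x, hn, rfl⟩⟩
      · exact iUnion_subset hWV
    rw [hVeq]
    refine Sat.iUnion fun n => Sat.mono ?_ (hsat n)
    calc tn n ≤ c (n+1) := by rw [hcs]; exact h2 n (c n)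
      _ ≤ t := hlub.1 ⟨n+1, rfl⟩

lemma exists_sat_all (hpsys : IsInvSys p) (hqsys : IsInvSys q) (hqsc : SigmaComplete q)
    {f : InvLim p → InvLim q} (hf : Continuous f) (hfo : IsOpenMap f) (s0 : ι) :
    ∃ t, s0 ≤ t ∧ ∀ U : Set (X s0), IsOpen U → Sat q t (f '' {x | x.1 s0 ∈ U}) := by
  classical
  haveI : SecondCountableTopology (X s0) := by
    letI := TopologicalSpace.metrizableSpaceMetric (X s0); infer_instance
  obtain ⟨b, hbc, -, hbasis⟩ := TopologicalSpace.exists_countable_basis (X s0)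
  rcases b.eq_empty_or_nonempty with hbe | hbne
  · refine ⟨s0, le_refl s0, fun U hU => ?_⟩
    obtain ⟨S, hSb, rfl⟩ := hbasis.open_eq_sUnion hU
    rw [hbe, subset_empty_iff] at hSb
    subst hSb
    simp only [sUnion_empty]
    rintro y ⟨x, hx, rfl⟩ z hz
    exact absurd hx (by simp)
  · obtain ⟨e, he⟩ := hbc.exists_eq_range hbne
    have stepn : ∀ n : ℕ, ∃ t, s0 ≤ t ∧ Sat q t (f '' {x | x.1 s0 ∈ e n}) := by
      intro n
      have : IsOpen (e n) := hbasis.isOpen (he ▸ mem_range_self n)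
      exact exists_sat_one hpsys hqsys hqsc hf hfo s0 this
    choose tn htn hsat using stepn
    have step : ∀ (n : ℕ) (v : ι), ∃ w, v ≤ w ∧ tn n ≤ w := fun n v => hqsys.directed v (tn n)
    choose st h1 h2 using step
    set c : ℕ → ι := fun n => Nat.rec s0 (fun n v => st n v) n with hc
    have hcs : ∀ n, c (n+1) = st n (c n) := fun n => rfl
    have hmono : Monotone c := monotone_nat_of_le_succ fun n => by rw [hcs]; exact h1 n (c n)
    obtain ⟨t, hlub, -⟩ := chain_lub (r := q) hqsc hmono
    refine ⟨t, hlub.1 ⟨0, rfl⟩, fun U hU => ?_⟩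
    obtain ⟨S, hSb, rfl⟩ := hbasis.open_eq_sUnion hU
    have hset : {x : InvLim p | x.1 s0 ∈ ⋃₀ S} = ⋃ B ∈ S, {x : InvLim p | x.1 s0 ∈ B} := by
      ext x; simp [mem_sUnion]
    rw [hset, image_iUnion]
    refine Sat.iUnion fun B => ?_
    simp only [image_iUnion]
    refine Sat.iUnion fun hB => ?_
    obtain ⟨n, hn⟩ : ∃ n, e n = B := by
      have := hSb hB; rw [he] at this; obtain ⟨n, hn⟩ := this; exact ⟨n, hn⟩
    subst hn
    refine Sat.mono ?_ (hsat n)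
    calc tn n ≤ c (n+1) := by rw [hcs]; exact h2 n (c n)
      _ ≤ t := hlub.1 ⟨n+1, rfl⟩


lemma mono_range_directedOn {c : ℕ → ι} (hc : Monotone c) : DirectedOn (· ≤ ·) (Set.range c) := by
  rintro a ⟨m, rfl⟩ b ⟨n, rfl⟩
  exact ⟨c (max m n), Set.mem_range_self _, hc (le_max_left m n), hc (le_max_right m n)⟩

lemma directedOn_finset_ub {M : Set ι} (hdir : DirectedOn (· ≤ ·) M) (hne : M.Nonempty)
    (J : Finset {s : ι // s ∈ M}) : ∃ m, ∃ _hm : m ∈ M, ∀ j ∈ J, (j : ι) ≤ m := by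
  classical
  induction J using Finset.induction_on with
  | empty => exact ⟨hne.choose, hne.choose_spec, fun j hj => absurd hj (Finset.notMem_empty j)⟩
  | @insert j J hjJ ih =>
    obtain ⟨m, hm, hub⟩ := ih
    obtain ⟨m', hm', hjm', hmm'⟩ := hdir j.1 j.2 m hm
    refine ⟨m', hm', fun k hk => ?_⟩
    rcases Finset.mem_insert.mp hk with rfl | hkJ
    · exact hjm'
    · exact (hub k hkJ).trans hmm'

lemma sat_of_gen (hpsys : IsInvSys p) {f : InvLim p → InvLim q} {t : ι} {M : Set ι}
    (hMne : M.Nonempty) (hMdir : DirectedOn (· ≤ ·) M) (hMle : ∀ s ∈ M, s ≤ t)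
    (hinj : ∀ a b : X t, (∀ s (hs : s ∈ M), p (hMle s hs) a = p (hMle s hs) b) → a = b)
    (hsat : ∀ s (hs : s ∈ M) (U' : Set (X s)), IsOpen U' → Sat q t (f '' {x | x.1 s ∈ U'}))
    {U : Set (X t)} (hU : IsOpen U) : Sat q t (f '' {x | x.1 t ∈ U}) := by
  classical
  set Φ : X t → (∀ s : {s : ι // s ∈ M}, X s.1) := fun a s => p (hMle s.1 s.2) a with hΦ
  have hΦc : Continuous Φ := continuous_pi fun s => hpsys.continuous _
  have hΦi : Function.Injective Φ := fun a b h => hinj a b (fun s hs => congrFun h ⟨s, hs⟩)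
  have hemb := hΦc.isClosedEmbedding hΦi
  obtain ⟨O, hO, hOU⟩ := hemb.isInducing.isOpen_iff.mp hU
  have key : ∀ a ∈ U, ∃ (s' : ι) (hs' : s' ∈ M) (U' : Set (X s')), IsOpen U' ∧
      p (hMle s' hs') a ∈ U' ∧ (∀ b : X t, p (hMle s' hs') b ∈ U' → b ∈ U) := by
    intro a ha
    have haO : Φ a ∈ O := by
      have h2 : a ∈ Φ ⁻¹' O := by rw [hOU]; exact ha
      exact h2
    obtain ⟨J, u, hJu, hpi⟩ := isOpen_pi_iff.mp hO (Φ a) haO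
    obtain ⟨m, hmM, hub⟩ := directedOn_finset_ub hMdir hMne J
    refine ⟨m, hmM, ⋂ j : {j : {s : ι // s ∈ M} // j ∈ J}, (p (hub j.1 j.2)) ⁻¹' (u j.1),
      ?_, ?_, ?_⟩
    · exact isOpen_iInter_of_finite fun j => (hJu j.1 j.2).1.preimage (hpsys.continuous _)
    · refine mem_iInter.mpr fun j => ?_
      have : p (hub j.1 j.2) (p (hMle m hmM) a) = Φ a j.1 := by
        rw [hpsys.map_comp]
      rw [mem_preimage, this]
      exact (hJu j.1 j.2).2
    · intro b hb
      have hbO : Φ b ∈ O := by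
        apply hpi
        intro j hj
        have := mem_iInter.mp hb ⟨j, hj⟩
        rw [mem_preimage] at this
        have heq : p (hub j hj) (p (hMle m hmM) b) = Φ b j := by rw [hpsys.map_comp]
        rwa [heq] at this
      have h2 : b ∈ Φ ⁻¹' O := hbO
      rwa [hOU] at h2
  rintro y ⟨x, hx, rfl⟩ z hz
  obtain ⟨s', hs', U', hU'o, hmem, hclose⟩ := key (x.1 t) hx
  have hx' : x.1 s' ∈ U' := by rw [← x.2 (hMle s' hs')]; exact hmem
  obtain ⟨x'', hx'', hz2⟩ := hsat s' hs' U' hU'o (f x) ⟨x, hx', rfl⟩ z hz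
  refine ⟨x'', ?_, hz2⟩
  show x''.1 t ∈ U
  refine hclose (x''.1 t) ?_
  rw [x''.2 (hMle s' hs')]
  exact hx''

variable (p q) in
def To (f : InvLim p → InvLim q) : Set ι :=
  Tm p q f ∩ {t | ∀ U : Set (X t), IsOpen U → Sat q t (f '' {x | x.1 t ∈ U})}

lemma To_sigmaClosed (hpsys : IsInvSys p) (hpsc : SigmaComplete p) (hqsc : SigmaComplete q)
    (f : InvLim p → InvLim q) : SigmaClosedIn (To p q f) := by
  intro M hMT hMne hMc hMdir t hlub
  constructor
  · exact Tm_sigmaClosed hqsc f M (fun s hs => (hMT hs).1) hMne hMc hMdir t hlub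
  · intro U hU
    obtain ⟨t', hlub', hinj⟩ := hpsc M hMne hMc hMdir
    obtain rfl : t' = t := hlub'.unique hlub
    exact sat_of_gen hpsys hMne hMdir (fun s hs => hlub'.1 hs) hinj
      (fun s hs U' hU' => Sat.mono (hlub'.1 hs) ((hMT hs).2 U' hU')) hU

lemma To_cofinal (hpsys : IsInvSys p) (hpsc : SigmaComplete p)
    (hqsys : IsInvSys q) (hqsc : SigmaComplete q)
    {f : InvLim p → InvLim q} (hf : Continuous f) (hfo : IsOpenMap f) (s0 : ι) :
    ∃ t ∈ To p q f, s0 ≤ t := by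
  classical
  have step : ∀ v : ι, ∃ w, v ≤ w ∧ (∃ α, v ≤ α ∧ α ≤ w ∧ α ∈ Tm p q f) ∧
      ∀ U' : Set (X v), IsOpen U' → Sat q w (f '' {x | x.1 v ∈ U'}) := by
    intro v
    obtain ⟨α, hαT, hvα⟩ := Tm_cofinal hpsys hpsc hqsc f hf v
    obtain ⟨β, hvβ, hβsat⟩ := exists_sat_all hpsys hqsys hqsc hf hfo v
    obtain ⟨w, hαw, hβw⟩ := hpsys.directed α β
    exact ⟨w, hvα.trans hαw, ⟨α, hvα, hαw, hαT⟩, fun U' hU' => Sat.mono hβw (hβsat U' hU')⟩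
  choose st h1 h2 h3 using step
  set c : ℕ → ι := fun n => st^[n] s0 with hc
  have hcs : ∀ n, c (n+1) = st (c n) := fun n => Function.iterate_succ_apply' st n s0
  have hmono : Monotone c := monotone_nat_of_le_succ fun n => by rw [hcs]; exact h1 (c n)
  obtain ⟨t, hlub, hinj⟩ := chain_lub (r := p) hpsc hmono
  have hct : ∀ n, c n ≤ t := fun n => hlub.1 ⟨n, rfl⟩
  have hα : ∀ n : ℕ, ∃ α, c n ≤ α ∧ α ≤ c (n+1) ∧ α ∈ Tm p q f := by
    intro n
    have h := h2 (c n)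
    rw [← hcs n] at h
    exact h
  choose α hα1 hα2 hα3 using hα
  have hαmono : Monotone α := monotone_nat_of_le_succ fun n => (hα2 n).trans (hα1 (n+1))
  have hlubα : IsLUB (Set.range α) t := by
    constructor
    · rintro x ⟨n, rfl⟩
      exact (hα2 n).trans (hct (n+1))
    · intro v hv
      apply hlub.2
      rintro x ⟨n, rfl⟩
      exact (hα1 n).trans (hv ⟨n, rfl⟩)
  have hTm : t ∈ Tm p q f := Tm_sigmaClosed hqsc f (Set.range α)
    (by rintro x ⟨n, rfl⟩; exact hα3 n) (Set.range_nonempty α) (Set.countable_range α)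
    (mono_range_directedOn hαmono) t hlubα
  have hsatt : ∀ U : Set (X t), IsOpen U → Sat q t (f '' {x | x.1 t ∈ U}) := by
    intro U hU
    refine sat_of_gen hpsys (Set.range_nonempty c) (mono_range_directedOn hmono)
      (fun s hs => hlub.1 hs) (fun a b hab => hinj a b (fun n => hab (c n) ⟨n, rfl⟩))
      ?_ hU
    rintro s ⟨n, rfl⟩ U' hU'
    have hs := h3 (c n) U' hU'
    rw [← hcs n] at hs
    exact Sat.mono (hct (n+1)) hs
  exact ⟨t, ⟨hTm, hsatt⟩, hct 0⟩

lemma mkF_open (hpsys : IsInvSys p) (hqsys : IsInvSys q) {f : InvLim p → InvLim q}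
    (hf : Continuous f) (hfo : IsOpenMap f) {t : ι} (ht : t ∈ To p q f) :
    IsOpenMap (mkF p q hpsys f t) := by
  haveI : CompactSpace (InvLim q) := invLim_compactSpace hqsys
  intro U hU
  set S : Set (InvLim q) := f '' {x | x.1 t ∈ U} with hS
  have hSopen : IsOpen S := hfo _ (hU.preimage (continuous_proj t))
  have hSsat : Sat q t S := ht.2 U hU
  have himg : mkF p q hpsys f t '' U = (fun y : InvLim q => y.1 t) '' S := by
    ext b
    constructor
    · rintro ⟨a, ha, rfl⟩
      obtain ⟨x, hx⟩ := proj_surjective hpsys t a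
      have hx' : x.1 t = a := hx
      refine ⟨f x, ⟨x, by rw [mem_setOf_eq, hx']; exact ha, rfl⟩, ?_⟩
      show (f x).1 t = mkF p q hpsys f t a
      rw [mkF_spec hpsys f ht.1, hx']
    · rintro ⟨y, ⟨x, hx, rfl⟩, rfl⟩
      exact ⟨x.1 t, hx, (mkF_spec hpsys f ht.1 x).symm⟩
  rw [himg]
  have hcomp : (fun y : InvLim q => y.1 t) '' S = ((fun y : InvLim q => y.1 t) '' Sᶜ)ᶜ := by
    apply le_antisymm
    · rintro b ⟨y, hy, rfl⟩
      intro hbc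
      obtain ⟨z, hz, hzb⟩ := hbc
      exact hz (hSsat y hy z hzb)
    · intro b hb
      obtain ⟨y, hy⟩ := proj_surjective hqsys t b
      by_cases hyS : y ∈ S
      · exact ⟨y, hyS, hy⟩
      · exact absurd ⟨y, hyS, hy⟩ hb
  rw [hcomp]
  exact (((hSopen.isClosed_compl.isCompact).image (continuous_proj t)).isClosed).isOpen_compl

end Main

/-- given σ-complete inverse systems of compact metrizable spaces
`(X_s, p^t_s, Σ)` and `(Y_s, q^t_s, Σ)` with limits `X`, `Y` and a continuous map
`f : X → Y`, there are a σ-closed cofinal `T ⊆ Σ` and continuous maps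
`f_t : X_t → Y_t` (`t ∈ T`) with `q_t ∘ f = f_t ∘ p_t`; moreover if `f` is open
then the `f_t` may be chosen open. -/
theorem statement1 {ι : Type*} [PartialOrder ι] {X Y : ι → Type*}
    [∀ s, TopologicalSpace (X s)] [∀ s, CompactSpace (X s)] [∀ s, T2Space (X s)]
    [∀ s, TopologicalSpace.MetrizableSpace (X s)]
    [∀ s, TopologicalSpace (Y s)] [∀ s, CompactSpace (Y s)] [∀ s, T2Space (Y s)]
    [∀ s, TopologicalSpace.MetrizableSpace (Y s)]
    (p : ∀ ⦃s t : ι⦄, s ≤ t → X t → X s) (q : ∀ ⦃s t : ι⦄, s ≤ t → Y t → Y s)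
    (hpsys : IsInvSys p) (hpsc : SigmaComplete p)
    (hqsys : IsInvSys q) (hqsc : SigmaComplete q)
    (f : InvLim p → InvLim q) (hf : Continuous f) :
    ∃ T : Set ι, SigmaClosedIn T ∧ (∀ s : ι, ∃ t ∈ T, s ≤ t) ∧
      ∃ F : ∀ t ∈ T, X t → Y t,
        (∀ t (ht : t ∈ T), Continuous (F t ht)) ∧
        (∀ t (ht : t ∈ T) (x : InvLim p), (f x).1 t = F t ht (x.1 t)) ∧
        (IsOpenMap f → ∀ t (ht : t ∈ T), IsOpenMap (F t ht)) := by
  by_cases hfo : IsOpenMap f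
  · exact ⟨To p q f, To_sigmaClosed hpsys hpsc hqsc f,
      fun s => To_cofinal hpsys hpsc hqsys hqsc hf hfo s,
      fun t _ => mkF p q hpsys f t,
      fun t ht => mkF_continuous hpsys hf ht.1,
      fun t ht x => mkF_spec hpsys f ht.1 x,
      fun _ t ht => mkF_open hpsys hqsys hf hfo ht⟩
  · exact ⟨Tm p q f, Tm_sigmaClosed hqsc f,
      fun s => Tm_cofinal hpsys hpsc hqsc f hf s,
      fun t _ => mkF p q hpsys f t,
      fun t ht => mkF_continuous hpsys hf ht,
      fun t ht x => mkF_spec hpsys f ht x,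
      fun h => absurd h hfo⟩
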